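/- arXiv:1608.00740 — 3 statements merged into one kernel-verified Lean document; each statement's English description precedes it below -/
import Mathlib

section
/- In the free Lie algebra on generators a and b, every element of the second term of the lower central series of the ideal generated by brackets (i.e., elements of the commutator subalgebra), modulo the double commutator, is a linear combination of the elements ad(a)^k ad(b)^l ([a,b]) for k, l ≥ 0. -/
noncomputable section

/-- The free Lie algebra over ℚ on two generators. -/
abbrev L : Type := FreeLieAlgebra ℚ Bool

/-- The generator `a`. -/
def ga : L := FreeLieAlgebra.of ℚ true
/-- The generator `b`. -/
def gb : L := FreeLieAlgebra.of ℚ false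

/-- `D¹L = [L, L]`, the commutator ideal. -/
def D1 : LieIdeal ℚ L := ⁅(⊤ : LieIdeal ℚ L), (⊤ : LieIdeal ℚ L)⁆
/-- `D²L = [[L,L],[L,L]]`, the double commutator. -/
def D2 : LieIdeal ℚ L := ⁅D1, D1⁆

/-- Iterated adjoint action: `adp x k y = ad(x)^k (y)`. -/
def adp (x : L) (k : ℕ) (y : L) : L := ((LieAlgebra.ad ℚ L x) ^ k) y

namespace AuxProof

lemma adp_zero (x y : L) : adp x 0 y = y := rfl

lemma adp_succ (x : L) (k : ℕ) (y : L) : adp x (k+1) y = ⁅x, adp x k y⁆ := by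
  simp only [adp, pow_succ']
  rfl

/-- The target set. -/
def SS : Set L := {y : L | ∃ k l : ℕ, y = adp ga k (adp gb l ⁅ga, gb⁆)}

/-- The target submodule. -/
def P : Submodule ℚ L := (D2 : Submodule ℚ L) ⊔ Submodule.span ℚ SS

lemma D2_le_P : (D2 : Submodule ℚ L) ≤ P := le_sup_left

lemma span_le_P : Submodule.span ℚ SS ≤ P := le_sup_right

lemma mem_D1_lie (x y : L) : ⁅x, y⁆ ∈ D1 :=
  LieSubmodule.lie_mem_lie (LieSubmodule.mem_top x) (LieSubmodule.mem_top y)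

lemma adp_mem_D1 (x : L) (k : ℕ) {w : L} (hw : w ∈ D1) : adp x k w ∈ D1 := by
  induction k with
  | zero => exact hw
  | succ k ih => rw [adp_succ]; exact D1.lie_mem ih

lemma adp_mem_D2 (x : L) (k : ℕ) {w : L} (hw : w ∈ D2) : adp x k w ∈ D2 := by
  induction k with
  | zero => exact hw
  | succ k ih => rw [adp_succ]; exact D2.lie_mem ih

lemma gen_mem_D1 {w : L} (hw : w ∈ SS) : w ∈ D1 := by
  obtain ⟨k, l, rfl⟩ := hw
  exact adp_mem_D1 _ _ (adp_mem_D1 _ _ (mem_D1_lie _ _))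

lemma P_le_D1 : P ≤ (D1 : Submodule ℚ L) := by
  refine sup_le ?_ ?_
  · intro x hx
    exact (LieSubmodule.lie_le_right D1 D1) hx
  · rw [Submodule.span_le]
    intro x hx
    exact gen_mem_D1 hx

/-- Key commutation lemma: `ad(b)` and `ad(a)^k` commute modulo `D2` on `D1`. -/
lemma commute_mod_D2 (k : ℕ) {w : L} (hw : w ∈ D1) :
    ∃ d ∈ D2, ⁅gb, adp ga k w⁆ = adp ga k ⁅gb, w⁆ + d := by
  induction k with
  | zero => exact ⟨0, D2.zero_mem, by simp [adp_zero]⟩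
  | succ k ih =>
    obtain ⟨d, hd, hEq⟩ := ih
    refine ⟨⁅⁅gb, ga⁆, adp ga k w⁆ + ⁅ga, d⁆, ?_, ?_⟩
    · exact Submodule.add_mem _
        (LieSubmodule.lie_mem_lie (mem_D1_lie gb ga) (adp_mem_D1 ga k hw))
        (D2.lie_mem hd)
    · rw [adp_succ, adp_succ, leibniz_lie, hEq, lie_add]
      abel

lemma lie_ga_P {v : L} (hv : v ∈ P) : ⁅ga, v⁆ ∈ P := by
  obtain ⟨y, hy, z, hz, rfl⟩ := Submodule.mem_sup.mp hv
  rw [lie_add]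
  refine Submodule.add_mem _ (D2_le_P (D2.lie_mem hy)) ?_
  refine Submodule.span_induction (p := fun z _ => ⁅ga, z⁆ ∈ P) ?_ ?_ ?_ ?_ hz
  · rintro x ⟨k, l, rfl⟩
    exact span_le_P (Submodule.subset_span ⟨k + 1, l, (adp_succ ga k _).symm⟩)
  · simp only [lie_zero]; exact P.zero_mem
  · intro x y _ _ hx hy; rw [lie_add]; exact P.add_mem hx hy
  · intro r x _ hx; rw [lie_smul]; exact P.smul_mem r hx

lemma lie_gb_P {v : L} (hv : v ∈ P) : ⁅gb, v⁆ ∈ P := by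
  obtain ⟨y, hy, z, hz, rfl⟩ := Submodule.mem_sup.mp hv
  rw [lie_add]
  refine Submodule.add_mem _ (D2_le_P (D2.lie_mem hy)) ?_
  refine Submodule.span_induction (p := fun z _ => ⁅gb, z⁆ ∈ P) ?_ ?_ ?_ ?_ hz
  · rintro x ⟨k, l, rfl⟩
    obtain ⟨d, hd, hEq⟩ := commute_mod_D2 k (adp_mem_D1 gb l (mem_D1_lie ga gb))
    rw [hEq]
    refine Submodule.add_mem _ ?_ (D2_le_P hd)
    rw [← adp_succ]
    exact span_le_P (Submodule.subset_span ⟨k, l + 1, rfl⟩)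
  · simp only [lie_zero]; exact P.zero_mem
  · intro x y _ _ hx hy; rw [lie_add]; exact P.add_mem hx hy
  · intro r x _ hx; rw [lie_smul]; exact P.smul_mem r hx

lemma lie_P_P {p q : L} (hp : p ∈ P) (hq : q ∈ P) : ⁅p, q⁆ ∈ P :=
  D2_le_P (LieSubmodule.lie_mem_lie (P_le_D1 hp) (P_le_D1 hq))

/-- The candidate subalgebra `C = span{a,b} + P`. -/
def C : Submodule ℚ L := Submodule.span ℚ {ga, gb} ⊔ P

lemma mem_C (x : L) (hx : x ∈ C) : ∃ α β : ℚ, ∃ p ∈ P, x = α • ga + β • gb + p := by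
  obtain ⟨y, hy, p, hp, rfl⟩ := Submodule.mem_sup.mp hx
  obtain ⟨α, β, rfl⟩ := Submodule.mem_span_pair.mp hy
  exact ⟨α, β, p, hp, rfl⟩

lemma gagb_mem_P : ⁅ga, gb⁆ ∈ P :=
  span_le_P (Submodule.subset_span ⟨0, 0, rfl⟩)

lemma lie_ga_C {x : L} (hx : x ∈ C) : ⁅ga, x⁆ ∈ P := by
  obtain ⟨α, β, p, hp, rfl⟩ := mem_C x hx
  rw [lie_add, lie_add, lie_smul, lie_smul, lie_self, smul_zero, zero_add]
  exact P.add_mem (P.smul_mem β gagb_mem_P) (lie_ga_P hp)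

lemma lie_gb_C {x : L} (hx : x ∈ C) : ⁅gb, x⁆ ∈ P := by
  obtain ⟨α, β, p, hp, rfl⟩ := mem_C x hx
  rw [lie_add, lie_add, lie_smul, lie_smul, lie_self, smul_zero, add_zero]
  have : ⁅gb, ga⁆ ∈ P := by
    rw [← lie_skew]; exact P.neg_mem gagb_mem_P
  exact P.add_mem (P.smul_mem α this) (lie_gb_P hp)

lemma lie_C_C {x y : L} (hx : x ∈ C) (hy : y ∈ C) : ⁅x, y⁆ ∈ P := by
  obtain ⟨γ, δ, q, hq, rfl⟩ := mem_C y hy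
  obtain ⟨α, β, p, hp, hxe⟩ := mem_C x hx
  rw [lie_add, lie_add, lie_smul, lie_smul]
  refine P.add_mem (P.add_mem (P.smul_mem _ ?_) (P.smul_mem _ ?_)) ?_
  · rw [← lie_skew]; exact P.neg_mem (lie_ga_C hx)
  · rw [← lie_skew]; exact P.neg_mem (lie_gb_C hx)
  · rw [hxe, add_lie, add_lie, smul_lie, smul_lie]
    refine P.add_mem (P.add_mem (P.smul_mem _ ?_) (P.smul_mem _ ?_)) (lie_P_P hp hq)
    · exact lie_ga_P hq
    · exact lie_gb_P hq

/-- `C` as a Lie subalgebra. -/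
def Csub : LieSubalgebra ℚ L :=
  { C with
    lie_mem' := fun {_x _y} hx hy => (le_sup_right : P ≤ C) (lie_C_C hx hy) }

lemma mem_Csub_iff {x : L} : x ∈ Csub ↔ x ∈ C := Iff.rfl

lemma of_mem_Csub (b : Bool) : FreeLieAlgebra.of ℚ b ∈ Csub := by
  have : FreeLieAlgebra.of ℚ b ∈ Submodule.span ℚ ({ga, gb} : Set L) := by
    apply Submodule.subset_span
    cases b
    · right; rfl
    · left; rfl
  exact (le_sup_left : Submodule.span ℚ ({ga, gb} : Set L) ≤ C) this

lemma Csub_eq_top (z : L) : z ∈ Csub := by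
  let f : L →ₗ⁅ℚ⁆ Csub :=
    FreeLieAlgebra.lift ℚ (fun b => (⟨FreeLieAlgebra.of ℚ b, of_mem_Csub b⟩ : Csub))
  have h : Csub.incl.comp f = LieHom.id := by
    apply FreeLieAlgebra.hom_ext
    intro b
    simp only [LieHom.coe_comp, Function.comp_apply, LieHom.coe_id, f,
      FreeLieAlgebra.lift_of_apply]
    rfl
  have hz : Csub.incl (f z) = z := by
    have := DFunLike.congr_fun h z
    simpa using this
  rw [← hz]
  exact (f z).2

end AuxProof

open AuxProof in
/-- Every element of `[L,L]`, modulo the double commutator, is a linear combination of the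
elements `ad(a)^k ad(b)^l ([a,b])` for `k, l ≥ 0`. -/
theorem D1_spanned_by_ad_monomials_mod_D2 :
    (D1 : Submodule ℚ L) ≤
      (D2 : Submodule ℚ L) ⊔
        Submodule.span ℚ {y : L | ∃ k l : ℕ, y = adp ga k (adp gb l ⁅ga, gb⁆)} := by
  show (D1 : Submodule ℚ L) ≤ P
  rw [show (D1 : Submodule ℚ L) = _ from LieSubmodule.lieIdeal_oper_eq_linear_span' ..]
  rw [Submodule.span_le]
  rintro m ⟨x, -, y, -, rfl⟩
  exact lie_C_C (Csub_eq_top x) (Csub_eq_top y)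
end
end

section
/- Under the identification of [L,L]/[[L,L],[L,L]] with the polynomial module ℚ[U,V] sending ad(a)^k ad(b)^l([a,b]) to U^k V^l, the derivation ε_0 of the free Lie algebra L = Lie(a,b) determined by ε_0(a) = -b and ε_0([a,b]) = 0 induces on ℚ[U,V] the derivation -V ∂/∂U. -/
noncomputable section

lemma adp_succ (x : L) (k : ℕ) (y : L) : adp x (k + 1) y = ⁅x, adp x k y⁆ := by
  simp [adp, pow_succ']

lemma adp_zero (x y : L) : adp x 0 y = y := rfl

lemma lie_mem_D1 (x y : L) : ⁅x, y⁆ ∈ D1 :=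
  LieSubmodule.lie_mem_lie (LieSubmodule.mem_top x) (LieSubmodule.mem_top y)

lemma lie_mem_D2 {x y : L} (hx : x ∈ D1) (hy : y ∈ D1) : ⁅x, y⁆ ∈ D2 :=
  LieSubmodule.lie_mem_lie hx hy

lemma adp_mem_D1 (x : L) (k : ℕ) {y : L} (hy : y ∈ D1) : adp x k y ∈ D1 := by
  induction k with
  | zero => exact hy
  | succ k ih => rw [adp_succ]; exact D1.lie_mem ih

lemma comm_swap {z : L} (hz : z ∈ D1) (k : ℕ) :
    ⁅gb, adp ga k z⁆ - adp ga k ⁅gb, z⁆ ∈ D2 := by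
  induction k with
  | zero => simp [adp_zero]
  | succ k ih =>
    rw [adp_succ, adp_succ]
    have h1 : ⁅gb, ⁅ga, adp ga k z⁆⁆
        = ⁅⁅gb, ga⁆, adp ga k z⁆ + ⁅ga, ⁅gb, adp ga k z⁆⁆ := leibniz_lie _ _ _
    have h2 : ⁅⁅gb, ga⁆, adp ga k z⁆ ∈ D2 :=
      lie_mem_D2 (lie_mem_D1 _ _) (adp_mem_D1 _ _ hz)
    have h3 : ⁅ga, ⁅gb, adp ga k z⁆ - adp ga k ⁅gb, z⁆⁆ ∈ D2 := D2.lie_mem ih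
    have : ⁅gb, ⁅ga, adp ga k z⁆⁆ - ⁅ga, adp ga k ⁅gb, z⁆⁆
        = ⁅⁅gb, ga⁆, adp ga k z⁆ + ⁅ga, ⁅gb, adp ga k z⁆ - adp ga k ⁅gb, z⁆⁆ := by
      rw [h1, lie_sub]; abel
    rw [this]
    exact D2.add_mem h2 h3

/-- The derivation `ε₀` of `L = Lie(a,b)` determined by `ε₀(a) = -b`, `ε₀(b) = 0` satisfies
`ε₀([a,b]) = 0` and induces on the meta-abelian layer `[L,L]/[[L,L],[L,L]] ≅ ℚ[U,V]`
(via `ad(a)^k ad(b)^l([a,b]) ↦ U^k V^l`) the derivation `-V ∂/∂U`: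
`ε₀(ad(a)^k ad(b)^l([a,b])) ≡ -k · ad(a)^{k-1} ad(b)^{l+1}([a,b])` mod `[[L,L],[L,L]]`. -/
theorem epsilon_zero_acts_as_minus_V_dU (ε : LieDerivation ℚ L L)
    (hεa : ε ga = -gb) (hεb : ε gb = 0) :
    ε ⁅ga, gb⁆ = 0 ∧
    (∀ l : ℕ, ε (adp gb l ⁅ga, gb⁆) ∈ D2) ∧
    (∀ k l : ℕ,
      ε (adp ga (k + 1) (adp gb l ⁅ga, gb⁆)) +
        ((k : ℚ) + 1) • adp ga k (adp gb (l + 1) ⁅ga, gb⁆) ∈ D2) := by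
  have hab : ε ⁅ga, gb⁆ = 0 := by
    rw [LieDerivation.apply_lie_eq_add, hεa, hεb]
    simp
  have hbl : ∀ l : ℕ, ε (adp gb l ⁅ga, gb⁆) = 0 := by
    intro l
    induction l with
    | zero => exact hab
    | succ l ih =>
      rw [adp_succ, LieDerivation.apply_lie_eq_add, hεb, ih]
      simp
  refine ⟨hab, fun l => by rw [hbl]; exact D2.zero_mem, ?_⟩
  intro k l
  set Y : L := adp gb l ⁅ga, gb⁆ with hY
  have hYD1 : Y ∈ D1 := adp_mem_D1 _ _ (lie_mem_D1 _ _)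
  have hY' : adp gb (l + 1) ⁅ga, gb⁆ = ⁅gb, Y⁆ := adp_succ _ _ _
  rw [hY']
  induction k with
  | zero =>
    have : ε (adp ga 1 Y) = -⁅gb, Y⁆ := by
      rw [adp_succ, adp_zero, LieDerivation.apply_lie_eq_add, hbl l, hεa]
      simp
    rw [this, adp_zero]
    have h1 : ((0:ℕ):ℚ) + 1 = 1 := by norm_num
    rw [h1, one_smul, neg_add_cancel]
    exact D2.zero_mem
  | succ k ih =>
    have key : ε (adp ga (k + 1 + 1) Y)
        = -⁅gb, adp ga (k + 1) Y⁆ + ⁅ga, ε (adp ga (k + 1) Y)⁆ := by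
      rw [adp_succ ga (k + 1), LieDerivation.apply_lie_eq_add, hεa]
      rw [neg_lie, ← lie_skew gb]
      abel
    have hT := ih
    -- hT : ε (adp ga (k+1) Y) + (k+1) • adp ga k ⁅gb, Y⁆ ∈ D2
    have hC := comm_swap hYD1 (k + 1)
    -- hC : ⁅gb, adp ga (k+1) Y⁆ - adp ga (k+1) ⁅gb, Y⁆ ∈ D2
    have hgaT : ⁅ga, ε (adp ga (k + 1) Y) + ((k : ℚ) + 1) • adp ga k ⁅gb, Y⁆⁆ ∈ D2 :=
      D2.lie_mem hT
    have hrw : ε (adp ga (k + 1 + 1) Y) + (((k:ℕ) + 1 : ℕ) + 1 : ℚ) • adp ga (k + 1) ⁅gb, Y⁆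
        = ⁅ga, ε (adp ga (k + 1) Y) + ((k : ℚ) + 1) • adp ga k ⁅gb, Y⁆⁆
          - (⁅gb, adp ga (k + 1) Y⁆ - adp ga (k + 1) ⁅gb, Y⁆) := by
      rw [key, lie_add, lie_smul, ← adp_succ ga k ⁅gb, Y⁆]
      push_cast
      module
    rw [show (((k:ℕ) + 1 : ℕ) : ℚ) + 1 = (((k:ℕ) + 1 : ℕ) + 1 : ℚ) by push_cast; ring]
    rw [hrw]
    exact D2.sub_mem hgaT hC
end
end

section
/- A composition ε_{2k_1} ∘ ⋯ ∘ ε_{2k_n} of the derivations ε_{2k} (k ≥ 0) acts nontrivially on the meta-abelian quotient L/[[L,L],[L,L]] of the free Lie algebra L = Lie(a,b) only if the multi-index has the form (0,…,0,2k_n) or (0,…,0,2k_{n-1},0). -/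
noncomputable section

namespace Aux

/-- Induction principle for the free Lie algebra on two generators. -/
theorem L_induction (p : L → Prop) (h0 : p 0) (hadd : ∀ x y, p x → p y → p (x + y))
    (hsmul : ∀ (c : ℚ) (x), p x → p (c • x)) (hlie : ∀ x y, p x → p y → p ⁅x, y⁆)
    (ha : p ga) (hb : p gb) : ∀ x, p x := by
  let K : LieSubalgebra ℚ L :=
    { carrier := {x | p x}
      add_mem' := fun hx hy => hadd _ _ hx hy
      zero_mem' := h0
      smul_mem' := fun c x hx => hsmul c x hx
      lie_mem' := fun hx hy => hlie _ _ hx hy }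
  have hmem : ∀ t : Bool, FreeLieAlgebra.of ℚ t ∈ K := by
    intro t; cases t
    · exact hb
    · exact ha
  let f : Bool → K := fun t => ⟨FreeLieAlgebra.of ℚ t, hmem t⟩
  let F : L →ₗ⁅ℚ⁆ K := FreeLieAlgebra.lift ℚ f
  have hcomp : K.incl.comp F = LieHom.id := by
    apply (FreeLieAlgebra.lift ℚ).symm.injective
    funext t
    rw [FreeLieAlgebra.lift_symm_apply, FreeLieAlgebra.lift_symm_apply]
    simp only [Function.comp_apply, LieHom.comp_apply, LieHom.coe_id, id_eq]
    show K.incl (F (FreeLieAlgebra.of ℚ t)) = _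
    rw [show F (FreeLieAlgebra.of ℚ t) = f t from FreeLieAlgebra.lift_of_apply f t]
    rfl
  intro x
  have hx : K.incl (F x) = x := by rw [← LieHom.comp_apply, hcomp]; rfl
  have : K.incl (F x) ∈ K := (F x).2
  rwa [hx] at this

/-- The ideal generated by `⁅ga, gb⁆`. -/
def J : LieIdeal ℚ L := LieSubmodule.lieSpan ℚ L {⁅ga, gb⁆}

theorem ab_mem_J : ⁅ga, gb⁆ ∈ J := LieSubmodule.subset_lieSpan rfl

theorem lie_ga_mem_J (y : L) : ⁅ga, y⁆ ∈ J := by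
  induction y using L_induction with
  | h0 => rw [lie_zero]; exact J.zero_mem
  | hadd x y hx hy => rw [lie_add]; exact J.add_mem hx hy
  | hsmul c x hx => rw [lie_smul]; exact J.smul_mem c hx
  | hlie x y hx hy =>
      rw [leibniz_lie]
      refine J.add_mem ?_ (J.lie_mem hy)
      rw [← lie_skew]
      exact neg_mem (J.lie_mem hx)
  | ha => rw [lie_self]; exact J.zero_mem
  | hb => exact ab_mem_J

theorem lie_gb_mem_J (y : L) : ⁅gb, y⁆ ∈ J := by
  induction y using L_induction with
  | h0 => rw [lie_zero]; exact J.zero_mem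
  | hadd x y hx hy => rw [lie_add]; exact J.add_mem hx hy
  | hsmul c x hx => rw [lie_smul]; exact J.smul_mem c hx
  | hlie x y hx hy =>
      rw [leibniz_lie]
      refine J.add_mem ?_ (J.lie_mem hy)
      rw [← lie_skew]
      exact neg_mem (J.lie_mem hx)
  | ha => rw [← lie_skew]; exact neg_mem ab_mem_J
  | hb => rw [lie_self]; exact J.zero_mem

theorem lie_mem_J (x y : L) : ⁅x, y⁆ ∈ J := by
  induction x using L_induction with
  | h0 => rw [zero_lie]; exact J.zero_mem
  | hadd x₁ x₂ h1 h2 => rw [add_lie]; exact J.add_mem h1 h2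
  | hsmul c x hx => rw [smul_lie]; exact J.smul_mem c hx
  | hlie x₁ x₂ h1 h2 =>
      rw [lie_lie]
      exact sub_mem (J.lie_mem h2) (J.lie_mem h1)
  | ha => exact lie_ga_mem_J y
  | hb => exact lie_gb_mem_J y

theorem D1_le_J : D1 ≤ J := by
  show ⁅(⊤ : LieIdeal ℚ L), (⊤ : LieIdeal ℚ L)⁆ ≤ J
  rw [LieSubmodule.lieIdeal_oper_eq_span, LieSubmodule.lieSpan_le]
  rintro z ⟨⟨x, -⟩, ⟨y, -⟩, rfl⟩
  exact lie_mem_J x y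

theorem lie_mem_D1 (x y : L) : ⁅x, y⁆ ∈ D1 :=
  LieSubmodule.lie_mem_lie (LieSubmodule.mem_top x) (LieSubmodule.mem_top y)

theorem lie_mem_D2 {x y : L} (hx : x ∈ D1) (hy : y ∈ D1) : ⁅x, y⁆ ∈ D2 :=
  LieSubmodule.lie_mem_lie hx hy

theorem mem_D1_lie {x : L} (hx : x ∈ D1) (y : L) : ⁅x, y⁆ ∈ D1 := by
  rw [← lie_skew]; exact neg_mem (D1.lie_mem hx)
theorem adp_zero (x y : L) : adp x 0 y = y := by simp [adp]

theorem adp_succ (x : L) (j : ℕ) (y : L) : adp x (j + 1) y = ⁅x, adp x j y⁆ := by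
  rw [adp, adp, pow_succ', Module.End.mul_apply, LieAlgebra.ad_apply]

theorem lie_finset_sum {α : Type*} (x : L) (s : Finset α) (f : α → L) :
    ⁅x, ∑ j ∈ s, f j⁆ = ∑ j ∈ s, ⁅x, f j⁆ := by
  simpa only [LieAlgebra.ad_apply] using map_sum (LieAlgebra.ad ℚ L x) f s

/-- The key identity: a Tsunogai-type derivation kills `⁅a, b⁆`. -/
theorem key_ab_zero (d : LieDerivation ℚ L L) (m : ℕ) (hm : 0 < m) (c : ℚ)
    (hda : d ga = c • adp ga (2 * m) gb)
    (hdb : d gb = c • ∑ j ∈ Finset.range m,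
      ((-1 : ℚ)) ^ j • ⁅adp ga j gb, adp ga (2 * m - 1 - j) gb⁆) :
    d ⁅ga, gb⁆ = 0 := by
  set A : ℕ → L := fun j => adp ga j gb with hA
  set f : ℕ → L := fun j => ((-1 : ℚ)) ^ j • ⁅A j, A (2 * m - j)⁆ with hf
  have hsum : ⁅ga, ∑ j ∈ Finset.range m, ((-1 : ℚ)) ^ j • ⁅A j, A (2 * m - 1 - j)⁆⁆
      = ⁅gb, A (2 * m)⁆ := by
    rw [lie_finset_sum]
    have h1 : ∀ j ∈ Finset.range m,
        ⁅ga, ((-1 : ℚ)) ^ j • ⁅A j, A (2 * m - 1 - j)⁆⁆ = f j - f (j + 1) := by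
      intro j hj
      have hj' : j < m := Finset.mem_range.mp hj
      have e1 : 2 * m - 1 - j + 1 = 2 * m - j := by omega
      have e2 : 2 * m - (j + 1) = 2 * m - 1 - j := by omega
      rw [lie_smul, leibniz_lie, hA]
      rw [← adp_succ, ← adp_succ, e1]
      show ((-1:ℚ))^j • (⁅A (j+1), A (2*m-1-j)⁆ + ⁅A j, A (2*m-j)⁆) = f j - f (j+1)
      rw [hf]
      show _ = ((-1:ℚ))^j • ⁅A j, A (2*m-j)⁆ - ((-1:ℚ))^(j+1) • ⁅A (j+1), A (2*m-(j+1))⁆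
      rw [e2, pow_succ, smul_add]
      rw [mul_neg_one, neg_smul, sub_neg_eq_add]
      abel
    rw [Finset.sum_congr rfl h1, Finset.sum_range_sub' f m]
    have hfm : f m = 0 := by
      show ((-1:ℚ))^m • ⁅A m, A (2*m - m)⁆ = 0
      have : 2 * m - m = m := by omega
      rw [this, lie_self, smul_zero]
    have hf0 : f 0 = ⁅gb, A (2 * m)⁆ := by
      show ((-1:ℚ))^0 • ⁅A 0, A (2*m - 0)⁆ = _
      rw [pow_zero, one_smul, Nat.sub_zero]
      show ⁅adp ga 0 gb, A (2*m)⁆ = _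
      rw [adp_zero]
    rw [hfm, hf0, sub_zero]
  rw [LieDerivation.apply_lie_eq_add, hda, hdb, lie_smul, hsum, smul_lie]
  show c • ⁅gb, A (2*m)⁆ + c • ⁅A (2*m), gb⁆ = 0
  have hskew : ⁅gb, A (2*m)⁆ = -⁅A (2*m), gb⁆ := (lie_skew _ _).symm
  rw [hskew, smul_neg, neg_add_cancel]
/-- Specification of `ε₀`. -/
def specZ (d : LieDerivation ℚ L L) : Prop := d ga = -gb ∧ d gb = 0

/-- Specification of the Tsunogai derivations `ε_{2m}`, `m ≥ 1`. -/
def specP (d : LieDerivation ℚ L L) : Prop :=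
  ∃ m : ℕ, 0 < m ∧
    d ga = (2 / (Nat.factorial (2 * m - 2) : ℚ)) • adp ga (2 * m) gb ∧
    d gb = (2 / (Nat.factorial (2 * m - 2) : ℚ)) • ∑ j ∈ Finset.range m,
      ((-1 : ℚ)) ^ j • ⁅adp ga j gb, adp ga (2 * m - 1 - j) gb⁆

def spec (d : LieDerivation ℚ L L) : Prop := specZ d ∨ specP d

theorem specP.ga_mem {d : LieDerivation ℚ L L} (h : specP d) : d ga ∈ D1 := by
  obtain ⟨m, hm, hda, -⟩ := h
  rw [hda]
  refine D1.smul_mem _ ?_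
  have h2 : 2 * m = (2 * m - 1) + 1 := by omega
  rw [h2, adp_succ]
  exact lie_mem_D1 _ _

theorem specP.gb_mem {d : LieDerivation ℚ L L} (h : specP d) : d gb ∈ D1 := by
  obtain ⟨m, hm, -, hdb⟩ := h
  rw [hdb]
  refine D1.smul_mem _ (sum_mem fun j hj => D1.smul_mem _ (lie_mem_D1 _ _))

theorem spec.ab_zero {d : LieDerivation ℚ L L} (h : spec d) : d ⁅ga, gb⁆ = 0 := by
  rcases h with ⟨hda, hdb⟩ | ⟨m, hm, hda, hdb⟩
  · rw [LieDerivation.apply_lie_eq_add, hda, hdb, lie_zero, zero_add, neg_lie, lie_self,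
      neg_zero]
  · exact key_ab_zero d m hm _ hda hdb

/-- A Tsunogai derivation maps everything into `D1`. -/
theorem specP.map_top {d : LieDerivation ℚ L L} (h : specP d) (x : L) : d x ∈ D1 := by
  induction x using L_induction with
  | h0 => rw [map_zero]; exact D1.zero_mem
  | hadd x y hx hy => rw [map_add]; exact D1.add_mem hx hy
  | hsmul c x hx => rw [map_smul]; exact D1.smul_mem c hx
  | hlie x y hx hy =>
      rw [LieDerivation.apply_lie_eq_add]
      exact D1.add_mem (D1.lie_mem hy) (mem_D1_lie hx y)
  | ha => exact h.ga_mem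
  | hb => exact h.gb_mem

/-- Any of our derivations maps `D1` into `D1`. -/
theorem spec.map_D1 {d : LieDerivation ℚ L L} (h : spec d) {x : L} (hx : x ∈ D1) :
    d x ∈ D1 := by
  let S : LieIdeal ℚ L :=
    { carrier := {x | x ∈ D1 ∧ d x ∈ D1}
      add_mem' := fun ha hb => ⟨D1.add_mem ha.1 hb.1, by
        rw [map_add]; exact D1.add_mem ha.2 hb.2⟩
      zero_mem' := ⟨D1.zero_mem, by rw [map_zero]; exact D1.zero_mem⟩
      smul_mem' := fun c x hx => ⟨D1.smul_mem c hx.1, by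
        rw [map_smul]; exact D1.smul_mem c hx.2⟩
      lie_mem := fun {y x} hx => ⟨D1.lie_mem hx.1, by
        rw [LieDerivation.apply_lie_eq_add]
        exact D1.add_mem (D1.lie_mem hx.2) (D1.lie_mem hx.1)⟩ }
  have hJS : J ≤ S := by
    rw [J, LieSubmodule.lieSpan_le]
    rintro z rfl
    exact ⟨lie_mem_D1 _ _, by rw [h.ab_zero]; exact D1.zero_mem⟩
  exact ((D1_le_J.trans hJS) hx).2

/-- A Tsunogai derivation maps `D1` into `D2`. -/
theorem specP.map_D1_D2 {d : LieDerivation ℚ L L} (h : specP d) {x : L} (hx : x ∈ D1) :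
    d x ∈ D2 := by
  let S : LieIdeal ℚ L :=
    { carrier := {x | x ∈ D1 ∧ d x ∈ D2}
      add_mem' := fun ha hb => ⟨D1.add_mem ha.1 hb.1, by
        rw [map_add]; exact D2.add_mem ha.2 hb.2⟩
      zero_mem' := ⟨D1.zero_mem, by rw [map_zero]; exact D2.zero_mem⟩
      smul_mem' := fun c x hx => ⟨D1.smul_mem c hx.1, by
        rw [map_smul]; exact D2.smul_mem c hx.2⟩
      lie_mem := fun {y x} hx => ⟨D1.lie_mem hx.1, by
        rw [LieDerivation.apply_lie_eq_add]
        exact D2.add_mem (D2.lie_mem hx.2) (lie_mem_D2 (h.map_top y) hx.1)⟩ }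
  have hJS : J ≤ S := by
    rw [J, LieSubmodule.lieSpan_le]
    rintro z rfl
    exact ⟨lie_mem_D1 _ _, by rw [spec.ab_zero (Or.inr h)]; exact D2.zero_mem⟩
  exact ((D1_le_J.trans hJS) hx).2

/-- Any of our derivations maps `D2` into `D2`. -/
theorem spec.map_D2 {d : LieDerivation ℚ L L} (h : spec d) {x : L} (hx : x ∈ D2) :
    d x ∈ D2 := by
  let S : LieIdeal ℚ L :=
    { carrier := {x | x ∈ D2 ∧ d x ∈ D2}
      add_mem' := fun ha hb => ⟨D2.add_mem ha.1 hb.1, by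
        rw [map_add]; exact D2.add_mem ha.2 hb.2⟩
      zero_mem' := ⟨D2.zero_mem, by rw [map_zero]; exact D2.zero_mem⟩
      smul_mem' := fun c x hx => ⟨D2.smul_mem c hx.1, by
        rw [map_smul]; exact D2.smul_mem c hx.2⟩
      lie_mem := fun {y x} hx => ⟨D2.lie_mem hx.1, by
        rw [LieDerivation.apply_lie_eq_add]
        exact D2.add_mem (D2.lie_mem hx.2) (D2.lie_mem hx.1)⟩ }
  have hD2S : D2 ≤ S := by
    show ⁅D1, D1⁆ ≤ S
    rw [LieSubmodule.lieIdeal_oper_eq_span, LieSubmodule.lieSpan_le]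
    rintro z ⟨⟨u, hu⟩, ⟨v, hv⟩, rfl⟩
    refine ⟨lie_mem_D2 hu hv, ?_⟩
    rw [LieDerivation.apply_lie_eq_add]
    exact D2.add_mem (lie_mem_D2 hu (h.map_D1 hv)) (lie_mem_D2 (h.map_D1 hu) hv)
  exact (hD2S hx).2

/-- The submodule spanned by `b` together with `D1`. -/
def Msub : Submodule ℚ L := (Submodule.span ℚ {gb}) ⊔ (D1 : Submodule ℚ L)

theorem mem_Msub_lie {x : L} (hx : x ∈ Msub) (y : L) : ⁅x, y⁆ ∈ D1 := by
  rcases Submodule.mem_sup.mp hx with ⟨u, hu, v, hv, rfl⟩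
  rcases Submodule.mem_span_singleton.mp hu with ⟨c, rfl⟩
  rw [add_lie, smul_lie]
  exact D1.add_mem (D1.smul_mem c (lie_mem_D1 _ _)) (mem_D1_lie hv y)

theorem D1_le_Msub {x : L} (hx : x ∈ D1) : x ∈ Msub :=
  Submodule.mem_sup_right hx

/-- Any of our derivations maps everything into `Msub`. -/
theorem spec.map_top_M {d : LieDerivation ℚ L L} (h : spec d) (x : L) : d x ∈ Msub := by
  rcases h with hZ | hP
  · induction x using L_induction with
    | h0 => rw [map_zero]; exact Msub.zero_mem
    | hadd x y hx hy => rw [map_add]; exact Msub.add_mem hx hy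
    | hsmul c x hx => rw [map_smul]; exact Msub.smul_mem c hx
    | hlie x y hx hy =>
        rw [LieDerivation.apply_lie_eq_add]
        refine Msub.add_mem (D1_le_Msub ?_) (D1_le_Msub (mem_Msub_lie hx y))
        rw [← lie_skew]
        exact neg_mem (mem_Msub_lie hy x)
    | ha => rw [hZ.1]; exact neg_mem (Submodule.mem_sup_left (Submodule.mem_span_singleton_self gb))
    | hb => rw [hZ.2]; exact Msub.zero_mem
  · exact D1_le_Msub (hP.map_top x)

/-- Any of our derivations maps `Msub` into `D1`. -/
theorem spec.map_M_D1 {d : LieDerivation ℚ L L} (h : spec d) {x : L} (hx : x ∈ Msub) :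
    d x ∈ D1 := by
  rcases Submodule.mem_sup.mp hx with ⟨u, hu, v, hv, rfl⟩
  rcases Submodule.mem_span_singleton.mp hu with ⟨c, rfl⟩
  rw [map_add, map_smul]
  refine D1.add_mem (D1.smul_mem c ?_) (h.map_D1 hv)
  rcases h with hZ | hP
  · rw [hZ.2]; exact D1.zero_mem
  · exact hP.gb_mem
theorem foldr_D1 : ∀ (n : ℕ) (ε : Fin n → LieDerivation ℚ L L),
    (∀ i, spec (ε i)) → ∀ x ∈ D1, Fin.foldr n (fun i y => (ε i) y) x ∈ D1 := by
  intro n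
  induction n with
  | zero => intro ε hs x hx; rw [Fin.foldr_zero]; exact hx
  | succ n ih =>
      intro ε hs x hx
      rw [Fin.foldr_succ]
      exact (hs 0).map_D1 (ih (fun i => ε i.succ) (fun i => hs i.succ) x hx)

theorem foldr_oneP : ∀ (n : ℕ) (ε : Fin n → LieDerivation ℚ L L),
    (∀ i, spec (ε i)) → ∀ (j : Fin n), specP (ε j) →
      ∀ x : L, Fin.foldr n (fun i y => (ε i) y) x ∈ D1 := by
  intro n
  induction n with
  | zero => intro _ _ j; exact j.elim0
  | succ n ih =>
      intro ε hs j hj x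
      rw [Fin.foldr_succ]
      rcases Fin.eq_zero_or_eq_succ j with rfl | ⟨j', rfl⟩
      · exact hj.map_top _
      · exact (hs 0).map_D1 (ih (fun i => ε i.succ) (fun i => hs i.succ) j' hj x)

theorem foldr_D2 : ∀ (n : ℕ) (ε : Fin n → LieDerivation ℚ L L),
    (∀ i, spec (ε i)) → ∀ x ∈ D2, Fin.foldr n (fun i y => (ε i) y) x ∈ D2 := by
  intro n
  induction n with
  | zero => intro ε hs x hx; rw [Fin.foldr_zero]; exact hx
  | succ n ih =>
      intro ε hs x hx
      rw [Fin.foldr_succ]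
      exact (hs 0).map_D2 (ih (fun i => ε i.succ) (fun i => hs i.succ) x hx)

/-- Two Tsunogai derivations in the composition kill `L` mod `D2`. -/
theorem foldr_twoP : ∀ (n : ℕ) (ε : Fin n → LieDerivation ℚ L L),
    (∀ i, spec (ε i)) → ∀ (i j : Fin n), (i : ℕ) < (j : ℕ) →
      specP (ε i) → specP (ε j) →
      ∀ x : L, Fin.foldr n (fun i y => (ε i) y) x ∈ D2 := by
  intro n
  induction n with
  | zero => intro _ _ i; exact i.elim0
  | succ n ih =>
      intro ε hs i j hij hi hj x
      rw [Fin.foldr_succ]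
      rcases Fin.eq_zero_or_eq_succ i with rfl | ⟨i', rfl⟩
      · rcases Fin.eq_zero_or_eq_succ j with rfl | ⟨j', rfl⟩
        · exact absurd hij (lt_irrefl _)
        · exact hi.map_D1_D2
            (foldr_oneP n (fun i => ε i.succ) (fun i => hs i.succ) j' hj x)
      · rcases Fin.eq_zero_or_eq_succ j with rfl | ⟨j', rfl⟩
        · simp [Fin.val_succ] at hij
        · have : (i' : ℕ) < (j' : ℕ) := by
            simpa [Fin.val_succ] using hij
          exact (hs 0).map_D2
            (ih (fun i => ε i.succ) (fun i => hs i.succ) i' j' this hi hj x)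

/-- After at least two of our derivations, everything lands in `D1`. -/
theorem foldr_two_D1 (n : ℕ) (ε : Fin (n + 2) → LieDerivation ℚ L L)
    (hs : ∀ i, spec (ε i)) (x : L) :
    Fin.foldr (n + 2) (fun i y => (ε i) y) x ∈ D1 := by
  rw [Fin.foldr_succ]
  refine (hs 0).map_M_D1 ?_
  rw [Fin.foldr_succ]
  exact (hs (Fin.succ 0)).map_top_M _

/-- A Tsunogai derivation preceded (on the inside) by at least two derivations
kills `L` mod `D2`. -/
theorem foldr_deepP : ∀ (n : ℕ) (ε : Fin n → LieDerivation ℚ L L),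
    (∀ i, spec (ε i)) → ∀ (i : Fin n), (i : ℕ) + 2 < n → specP (ε i) →
      ∀ x : L, Fin.foldr n (fun i y => (ε i) y) x ∈ D2 := by
  intro n
  induction n with
  | zero => intro _ _ i; exact i.elim0
  | succ n ih =>
      intro ε hs i hd hi x
      rw [Fin.foldr_succ]
      rcases Fin.eq_zero_or_eq_succ i with rfl | ⟨i', rfl⟩
      · have hn : 2 < n + 1 := by simpa using hd
        obtain ⟨m, rfl⟩ : ∃ m, n = m + 2 := ⟨n - 2, by omega⟩
        exact hi.map_D1_D2
          (foldr_two_D1 m (fun i => ε i.succ) (fun i => hs i.succ) x)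
      · have : (i' : ℕ) + 2 < n := by
          have := hd; simp only [Fin.val_succ] at this; omega
        exact (hs 0).map_D2
          (ih (fun i => ε i.succ) (fun i => hs i.succ) i' this hi x)
end Aux


/-- A composition `ε_{2k₁} ∘ ⋯ ∘ ε_{2kₙ}` of the derivations `ε_{2k}` (with `ε₀(a) = -b`,
`ε₀(b) = 0`, and for `k ≥ 1` the Tsunogai derivation) acts nontrivially on the meta-abelian
quotient `L/[[L,L],[L,L]]` only if the multi-index has the form `(0,…,0,2kₙ)` or
`(0,…,0,2k_{n-1},0)`. -/
theorem composition_nontrivial_only_for_special_indices (n : ℕ) (k : Fin n → ℕ)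
    (ε : Fin n → LieDerivation ℚ L L)
    (h0 : ∀ i, k i = 0 → (ε i) ga = -gb ∧ (ε i) gb = 0)
    (h1 : ∀ i, 0 < k i →
      (ε i) ga = (2 / (Nat.factorial (2 * k i - 2) : ℚ)) • adp ga (2 * k i) gb ∧
      (ε i) gb = (2 / (Nat.factorial (2 * k i - 2) : ℚ)) •
        ∑ j ∈ Finset.range (k i),
          ((-1 : ℚ)) ^ j • ⁅adp ga j gb, adp ga (2 * k i - 1 - j) gb⁆)
    (hnontriv : ∃ x : L, Fin.foldr n (fun i y => (ε i) y) x ∉ D2) :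
    -- the multi-index is (0, …, 0, 2kₙ) …
    (∀ i : Fin n, (i : ℕ) < n - 1 → k i = 0) ∨
    -- … or (0, …, 0, 2k_{n-1}, 0)
    ((∀ i : Fin n, (i : ℕ) < n - 1 → (i : ℕ) ≠ n - 2 → k i = 0) ∧
      (∀ i : Fin n, (i : ℕ) = n - 1 → k i = 0)) := by
  classical
  have hs : ∀ i, Aux.spec (ε i) := by
    intro i
    rcases Nat.eq_zero_or_pos (k i) with h | h
    · exact Or.inl ⟨(h0 i h).1, (h0 i h).2⟩
    · exact Or.inr ⟨k i, h, (h1 i h).1, (h1 i h).2⟩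
  have hsP : ∀ i, k i ≠ 0 → Aux.specP (ε i) := by
    intro i hne
    have h := Nat.pos_of_ne_zero hne
    exact ⟨k i, h, (h1 i h).1, (h1 i h).2⟩
  obtain ⟨x, hx⟩ := hnontriv
  by_contra hcon
  push_neg at hcon
  obtain ⟨hA, hB⟩ := hcon
  obtain ⟨i1, hi1, hk1⟩ := hA
  by_cases hC : ∃ i : Fin n, (i : ℕ) < n - 1 ∧ (i : ℕ) ≠ n - 2 ∧ k i ≠ 0
  · obtain ⟨i2, h2a, h2b, h2c⟩ := hC
    have hd : (i2 : ℕ) + 2 < n := by have := i2.isLt; omega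
    exact hx (Aux.foldr_deepP n ε hs i2 hd (hsP i2 h2c) x)
  · push_neg at hC
    obtain ⟨i3, h3a, h3b⟩ := hB hC
    have hij : (i1 : ℕ) < (i3 : ℕ) := by omega
    exact hx (Aux.foldr_twoP n ε hs i1 i3 hij (hsP i1 hk1) (hsP i3 h3b) x)
end
end
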